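/- If Proposition A for lex #-decreasing holds, then Proposition A for #-decreasing holds. That is: if for all k, p > 0 and every lex #-decreasing function assignment U for ℕ^k there exist a finite A ⊆ ℕ^k and E ⊆ ℕ with |E| = p and E^k ⊆ A such that U(A) has at most k^k regressive values on E^k, then the same statement holds with 'lex #-decreasing' replaced by '#-decreasing'. -/

import Mathlib

/-- A function assignment for `α`: to each finite `A ⊆ α` it assigns a
function from `A` to `A` (values outside `A` are irrelevant). -/
structure FunAssign (α : Type*) where
  U : Finset α → α → α
  maps : ∀ A : Finset α, ∀ x ∈ A, U A x ∈ A

/-- `f` has at most `c` regressive values on `E^k`. -/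
def hasAtMostRegVals {k : ℕ} (f : (Fin k → ℕ) → (Fin k → ℕ))
    (E : Finset ℕ) (c : ℕ) : Prop :=
  {y : Fin k → ℕ | ∃ x : Fin k → ℕ, (∀ i, x i ∈ E) ∧ f x = y ∧
      (⨆ i, y i) < ⨅ i, x i}.Finite ∧
  {y : Fin k → ℕ | ∃ x : Fin k → ℕ, (∀ i, x i ∈ E) ∧ f x = y ∧
      (⨆ i, y i) < ⨅ i, x i}.ncard ≤ c

/-- Strict lexicographic order on `ℕ^k`. -/
def lexLt {k : ℕ} (x y : Fin k → ℕ) : Prop :=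
  ∃ i : Fin k, (∀ j : Fin k, j < i → x j = y j) ∧ x i < y i

/-- `V` is #-decreasing (w.r.t. the sup norm). -/
def SharpDecreasing {k : ℕ} (V : FunAssign (Fin k → ℕ)) : Prop :=
  ∀ (A : Finset (Fin k → ℕ)) (x : Fin k → ℕ),
    (∀ y ∈ A, V.U A y = V.U (insert x A) y) ∨
    ∃ y ∈ A, (⨆ i, x i) < (⨆ i, y i) ∧
      (⨆ i, V.U (insert x A) y i) < (⨆ i, V.U A y i)

/-- `V` is lex #-decreasing. -/
def LexSharpDecreasing {k : ℕ} (V : FunAssign (Fin k → ℕ)) : Prop :=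
  ∀ (A : Finset (Fin k → ℕ)) (x : Fin k → ℕ),
    (∀ y ∈ A, V.U A y = V.U (insert x A) y) ∨
    ∃ y ∈ A, lexLt x y ∧ lexLt (V.U (insert x A) y) (V.U A y)


namespace StmtAux

variable {k : ℕ}

lemma bddA (x : Fin k → ℕ) : BddAbove (Set.range x) := (Set.finite_range x).bddAbove

lemma sup_cons (hk : 0 < k) (a : ℕ) (x : Fin k → ℕ) :
    (⨆ i, (Fin.cons a x : Fin (k+1) → ℕ) i) = max a (⨆ i, x i) := by
  haveI : Nonempty (Fin k) := ⟨⟨0, hk⟩⟩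
  apply le_antisymm
  · refine ciSup_le ?_
    intro i
    induction i using Fin.cases with
    | zero => simpa using le_max_left a _
    | succ j =>
      simp only [Fin.cons_succ]
      exact le_trans (le_ciSup (bddA x) j) (le_max_right _ _)
  · refine max_le ?_ ?_
    · have := le_ciSup (bddA (Fin.cons a x : Fin (k+1) → ℕ)) 0
      simpa using this
    · refine ciSup_le fun j => ?_
      have := le_ciSup (bddA (Fin.cons a x : Fin (k+1) → ℕ)) j.succ
      simpa using this

lemma inf_cons (hk : 0 < k) (a : ℕ) (x : Fin k → ℕ) :
    (⨅ i, (Fin.cons a x : Fin (k+1) → ℕ) i) = min a (⨅ i, x i) := by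
  haveI : Nonempty (Fin k) := ⟨⟨0, hk⟩⟩
  apply le_antisymm
  · refine le_min ?_ ?_
    · have := ciInf_le (f := (Fin.cons a x : Fin (k+1) → ℕ)) (OrderBot.bddBelow _) 0
      simpa using this
    · refine le_ciInf fun j => ?_
      have := ciInf_le (f := (Fin.cons a x : Fin (k+1) → ℕ)) (OrderBot.bddBelow _) j.succ
      simpa using this
  · refine le_ciInf ?_
    intro i
    induction i using Fin.cases with
    | zero => simpa using min_le_left a _
    | succ j =>
      simp only [Fin.cons_succ]
      exact le_trans (min_le_right _ _) (ciInf_le (OrderBot.bddBelow _) j)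

lemma exists_eq_sup (hk : 0 < k) (x : Fin k → ℕ) : ∃ i, (⨆ j, x j) = x i := by
  haveI : Nonempty (Fin k) := ⟨⟨0, hk⟩⟩
  have : sSup (Set.range x) ∈ Set.range x :=
    Nat.sSup_mem (Set.range_nonempty x) (bddA x)
  obtain ⟨i, hi⟩ := this
  exact ⟨i, hi.symm⟩

lemma inf_le_sup (hk : 0 < k) (x : Fin k → ℕ) : (⨅ i, x i) ≤ ⨆ i, x i := by
  haveI : Nonempty (Fin k) := ⟨⟨0, hk⟩⟩
  exact le_trans (ciInf_le (OrderBot.bddBelow _) ⟨0, hk⟩) (le_ciSup (bddA x) ⟨0, hk⟩)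

/-- The embedding `x ↦ (|x|, x)`. -/
noncomputable def iot (x : Fin k → ℕ) : Fin (k+1) → ℕ := Fin.cons (⨆ i, x i) x

lemma iot_inj : Function.Injective (iot (k := k)) := by
  intro a b h
  have : ∀ i, a i = b i := fun i => by
    have := congrFun h i.succ
    simpa [iot] using this
  exact funext this

lemma sup_iot (hk : 0 < k) (x : Fin k → ℕ) : (⨆ i, iot x i) = ⨆ i, x i := by
  simp [iot, sup_cons hk]

lemma inf_iot (hk : 0 < k) (x : Fin k → ℕ) : (⨅ i, iot x i) = ⨅ i, x i := by
  simp [iot, inf_cons hk, min_eq_right (inf_le_sup hk x)]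

end StmtAux

namespace StmtAux

variable {k : ℕ}

attribute [local instance] Classical.propDecidable

lemma lexLt_of_zero_lt {n : ℕ} {a b : Fin (n+1) → ℕ} (h : a 0 < b 0) : lexLt a b :=
  ⟨0, fun j hj => absurd hj (Fin.not_lt_zero j), h⟩

/-- Preimage of a finset under `iot`. -/
noncomputable def pre (A' : Finset (Fin (k+1) → ℕ)) : Finset (Fin k → ℕ) :=
  A'.preimage iot (iot_inj.injOn)

lemma mem_pre {A' : Finset (Fin (k+1) → ℕ)} {x : Fin k → ℕ} :
    x ∈ pre A' ↔ iot x ∈ A' := Finset.mem_preimage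

lemma pre_insert_iot (A' : Finset (Fin (k+1) → ℕ)) (x : Fin k → ℕ) :
    pre (insert (iot x) A') = insert x (pre A') := by
  ext z
  simp [mem_pre, Finset.mem_insert, iot_inj.eq_iff]

lemma pre_insert_notRange (A' : Finset (Fin (k+1) → ℕ)) {x' : Fin (k+1) → ℕ}
    (h : ¬ ∃ x : Fin k → ℕ, iot x = x') :
    pre (insert x' A') = pre A' := by
  ext z
  simp only [mem_pre, Finset.mem_insert]
  constructor
  · rintro (hz | hz)
    · exact absurd ⟨z, hz⟩ h
    · exact hz
  · exact fun hz => Or.inr hz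

/-- Lift a `#`-decreasing assignment in dimension `k` to dimension `k+1`. -/
noncomputable def lift (V : FunAssign (Fin k → ℕ)) : FunAssign (Fin (k+1) → ℕ) where
  U A' x' := if h : ∃ x : Fin k → ℕ, iot x = x' then iot (V.U (pre A') h.choose) else x'
  maps A' x' hx' := by
    by_cases h : ∃ x : Fin k → ℕ, iot x = x'
    · rw [dif_pos h]
      have hc : h.choose ∈ pre A' := by
        rw [mem_pre, h.choose_spec]; exact hx'
      exact mem_pre.mp (V.maps (pre A') _ hc)
    · rw [dif_neg h]; exact hx'

lemma lift_U_iot (V : FunAssign (Fin k → ℕ)) (A' : Finset (Fin (k+1) → ℕ)) (x : Fin k → ℕ) :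
    (lift V).U A' (iot x) = iot (V.U (pre A') x) := by
  have h : ∃ x₀ : Fin k → ℕ, iot x₀ = iot x := ⟨x, rfl⟩
  show (if h : ∃ x₀ : Fin k → ℕ, iot x₀ = iot x then iot (V.U (pre A') h.choose) else iot x)
      = iot (V.U (pre A') x)
  rw [dif_pos h]
  have : h.choose = x := iot_inj h.choose_spec
  rw [this]

lemma lift_U_notRange (V : FunAssign (Fin k → ℕ)) (A' : Finset (Fin (k+1) → ℕ))
    {x' : Fin (k+1) → ℕ} (h : ¬ ∃ x : Fin k → ℕ, iot x = x') :
    (lift V).U A' x' = x' := dif_neg h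

lemma lift_lex (hk : 0 < k) {V : FunAssign (Fin k → ℕ)} (hV : SharpDecreasing V) :
    LexSharpDecreasing (lift V) := by
  intro A' x'
  by_cases h : ∃ x : Fin k → ℕ, iot x = x'
  · obtain ⟨x, rfl⟩ := h
    rcases hV (pre A') x with hsame | ⟨y, hyA, hy1, hy2⟩
    · left
      intro y' hy'
      by_cases h' : ∃ y : Fin k → ℕ, iot y = y'
      · obtain ⟨y, rfl⟩ := h'
        rw [lift_U_iot, lift_U_iot, pre_insert_iot]
        rw [hsame y (mem_pre.mpr hy')]
      · rw [lift_U_notRange V _ h', lift_U_notRange V _ h']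
    · right
      refine ⟨iot y, mem_pre.mp hyA, ?_, ?_⟩
      · apply lexLt_of_zero_lt
        simpa [iot] using hy1
      · rw [lift_U_iot, lift_U_iot, pre_insert_iot]
        apply lexLt_of_zero_lt
        simpa [iot] using hy2
  · left
    intro y' hy'
    by_cases h' : ∃ y : Fin k → ℕ, iot y = y'
    · obtain ⟨y, rfl⟩ := h'
      rw [lift_U_iot, lift_U_iot, pre_insert_notRange A' h]
    · rw [lift_U_notRange V _ h', lift_U_notRange V _ h']

end StmtAux

namespace StmtAux

/-- Finite hypergraph Ramsey theorem for `k`-element subsets of `ℕ`,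
with colors in an arbitrary type, at most `M` of which are used. -/
theorem myRamsey : ∀ (k M m : ℕ), ∃ q : ℕ,
    ∀ (S : Finset ℕ) (γ : Type) (Φ : Finset ℕ → γ) (t : Finset γ),
    q ≤ S.card → (∀ u, u ⊆ S → Φ u ∈ t) → t.card ≤ M →
    ∃ T, T ⊆ S ∧ T.card = m ∧
      ∀ u v, u ⊆ T → v ⊆ T → u.card = k → v.card = k → Φ u = Φ v := by
  intro k
  induction k with
  | zero =>
    intro M m
    refine ⟨m, fun S γ Φ t hS _ _ => ?_⟩
    obtain ⟨T, hTS, hTcard⟩ := Finset.exists_subset_card_eq (s := S) (n := m) hS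
    refine ⟨T, hTS, hTcard, fun u v hu hv hcu hcv => ?_⟩
    rw [Finset.card_eq_zero] at hcu hcv
    rw [hcu, hcv]
  | succ k ihk =>
    intro M m
    -- the chain lemma
    have chain : ∀ (L : ℕ), ∃ q : ℕ,
        ∀ (S : Finset ℕ) (γ : Type) (Φ : Finset ℕ → γ) (t : Finset γ),
        q ≤ S.card → (∀ u, u ⊆ S → Φ u ∈ t) → t.card ≤ M →
        ∃ (a : Fin L → ℕ) (χ : Fin L → γ), StrictMono a ∧ (∀ i, a i ∈ S) ∧
          (∀ i, χ i ∈ t) ∧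
          ∀ (i : Fin L) (u : Finset ℕ), u.card = k →
            (∀ b ∈ u, ∃ j, i < j ∧ b = a j) → Φ (insert (a i) u) = χ i := by
      intro L
      induction L with
      | zero =>
        refine ⟨0, fun S γ Φ t _ _ _ => ⟨Fin.elim0, Fin.elim0, ?_, ?_, ?_, ?_⟩⟩
        · intro i; exact i.elim0
        · intro i; exact i.elim0
        · intro i; exact i.elim0
        · intro i; exact i.elim0
      | succ L ihL =>
        obtain ⟨qc, hc⟩ := ihL
        obtain ⟨qr, hr⟩ := ihk M (max qc k)
        refine ⟨qr + 1, fun S γ Φ t hS hΦ ht => ?_⟩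
        have hSne : S.Nonempty := Finset.card_pos.mp (by omega)
        set a0 := S.min' hSne with ha0
        have ha0S : a0 ∈ S := S.min'_mem hSne
        set S1 := S.erase a0 with hS1
        have hS1card : qr ≤ S1.card := by
          rw [hS1, Finset.card_erase_of_mem ha0S]; omega
        have hS1sub : S1 ⊆ S := Finset.erase_subset _ _
        obtain ⟨T₁, hT₁S, hT₁card, hT₁mono⟩ :=
          hr S1 γ (fun u => Φ (insert a0 u)) t hS1card
            (fun u hu => hΦ _ (Finset.insert_subset ha0S (hu.trans hS1sub))) ht
        obtain ⟨u₀, hu₀T₁, hu₀card⟩ :=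
          Finset.exists_subset_card_eq (s := T₁) (n := k) (by rw [hT₁card]; exact le_max_right _ _)
        obtain ⟨a, χ, hamono, haT, hχt, hprop⟩ :=
          hc T₁ γ Φ t (by rw [hT₁card]; exact le_max_left _ _)
            (fun u hu => hΦ u (hu.trans (hT₁S.trans hS1sub))) ht
        have haS1 : ∀ i, a i ∈ S1 := fun i => hT₁S (haT i)
        have ha0lt : ∀ i, a0 < a i := by
          intro i
          have h1 : a i ∈ S := hS1sub (haS1 i)
          have h2 : a i ≠ a0 := Finset.ne_of_mem_erase (haS1 i)
          exact lt_of_le_of_ne (S.min'_le _ h1) (Ne.symm h2)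
        refine ⟨Fin.cases a0 a, Fin.cases (Φ (insert a0 u₀)) χ, ?_, ?_, ?_, ?_⟩
        · intro i j hij
          induction j using Fin.cases with
          | zero => exact absurd hij (Fin.not_lt_zero i)
          | succ j =>
            induction i using Fin.cases with
            | zero => simpa using ha0lt j
            | succ i =>
              simp only [Fin.cases_succ]
              exact hamono (by exact_mod_cast Fin.succ_lt_succ_iff.mp hij)
        · intro i
          induction i using Fin.cases with
          | zero => simpa using ha0S
          | succ i => simpa using hS1sub (haS1 i)
        · intro i
          induction i using Fin.cases with
          | zero =>
            simpa using hΦ _ (Finset.insert_subset ha0S ((hu₀T₁.trans hT₁S).trans hS1sub))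
          | succ i => simpa using hχt i
        · intro i u hucard hub
          induction i using Fin.cases with
          | zero =>
            have huT₁ : u ⊆ T₁ := by
              intro b hb
              obtain ⟨j, hj0, hbj⟩ := hub b hb
              obtain ⟨j', rfl⟩ : ∃ j' : Fin L, j = j'.succ := by
                refine ⟨j.pred ?_, (Fin.succ_pred _ _).symm⟩
                exact Fin.pos_iff_ne_zero.mp hj0
              rw [hbj]; simpa using haT j'
            simpa using hT₁mono u u₀ huT₁ hu₀T₁ hucard hu₀card
          | succ i =>
            simp only [Fin.cases_succ]
            refine hprop i u hucard ?_
            intro b hb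
            obtain ⟨j, hij, hbj⟩ := hub b hb
            obtain ⟨j', rfl⟩ : ∃ j' : Fin L, j = j'.succ := by
              refine ⟨j.pred ?_, (Fin.succ_pred _ _).symm⟩
              intro h0
              rw [h0] at hij
              exact absurd hij (Fin.not_lt_zero _)
            refine ⟨j', ?_, by simpa using hbj⟩
            exact_mod_cast Fin.succ_lt_succ_iff.mp hij
    -- main argument
    rcases Nat.eq_zero_or_pos m with rfl | hm
    · refine ⟨0, fun S γ Φ t _ _ _ => ⟨∅, Finset.empty_subset _, Finset.card_empty, ?_⟩⟩
      intro u v hu hv hcu _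
      have : u = ∅ := Finset.subset_empty.mp hu
      rw [this] at hcu
      simp at hcu
    · set L := M * m + m with hL
      obtain ⟨qL, hqL⟩ := chain L
      refine ⟨qL, fun S γ Φ t hS hΦ ht => ?_⟩
      obtain ⟨a, χ, hamono, haS, hχt, hprop⟩ := hqL S γ Φ t hS hΦ ht
      classical
      have htne : t.Nonempty := ⟨Φ ∅, hΦ ∅ (Finset.empty_subset S)⟩
      have hpigeon : ∃ y ∈ t, m ≤ ((Finset.univ : Finset (Fin L)).filter fun i => χ i = y).card := by
        apply Finset.exists_le_card_fiber_of_mul_le_card_of_maps_to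
          (fun i _ => hχt i) htne
        rw [Finset.card_fin]
        calc t.card * m ≤ M * m := Nat.mul_le_mul_right m ht
          _ ≤ L := by omega
      obtain ⟨y, _, hfib⟩ := hpigeon
      obtain ⟨J, hJsub, hJcard⟩ := Finset.exists_subset_card_eq (n := m) hfib
      refine ⟨J.image a, ?_, ?_, ?_⟩
      · intro b hb
        obtain ⟨i, _, rfl⟩ := Finset.mem_image.mp hb
        exact haS i
      · rw [Finset.card_image_of_injective _ hamono.injective, hJcard]
      · have key : ∀ w, w ⊆ J.image a → w.card = k + 1 → Φ w = y := by
          intro w hwT hwcard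
          have hwne : w.Nonempty := Finset.card_pos.mp (by omega)
          set b0 := w.min' hwne with hb0
          have hb0w : b0 ∈ w := w.min'_mem hwne
          obtain ⟨i, hiJ, hai⟩ := Finset.mem_image.mp (hwT hb0w)
          have hw' : (w.erase b0).card = k := by
            rw [Finset.card_erase_of_mem hb0w, hwcard]
            omega
          have helem : ∀ b ∈ w.erase b0, ∃ j, i < j ∧ b = a j := by
            intro b hb
            have hbw : b ∈ w := Finset.mem_of_mem_erase hb
            obtain ⟨j, hjJ, haj⟩ := Finset.mem_image.mp (hwT hbw)
            refine ⟨j, ?_, haj.symm⟩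
            have hbne : b ≠ b0 := Finset.ne_of_mem_erase hb
            have : b0 < b := lt_of_le_of_ne (w.min'_le b hbw) (Ne.symm hbne)
            rw [← hai, ← haj] at this
            exact hamono.lt_iff_lt.mp this
          have : Φ (insert (a i) (w.erase b0)) = χ i := hprop i _ hw' helem
          rw [hai, Finset.insert_erase hb0w] at this
          rw [this]
          have := hJsub hiJ
          simp only [Finset.mem_filter] at this
          exact this.2
        intro u v hu hv hcu hcv
        rw [key u hu hcu, key v hv hcv]

/-- Ramsey for all sizes `≤ k` simultaneously. -/
theorem myRamseyAll : ∀ (k M m : ℕ), ∃ q : ℕ,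
    ∀ (S : Finset ℕ) (γ : Type) (Φ : Finset ℕ → γ) (t : Finset γ),
    q ≤ S.card → (∀ u, u ⊆ S → Φ u ∈ t) → t.card ≤ M →
    ∃ T, T ⊆ S ∧ T.card = m ∧
      ∀ u v, u ⊆ T → v ⊆ T → u.card = v.card → u.card ≤ k → Φ u = Φ v := by
  intro k
  induction k with
  | zero =>
    intro M m
    refine ⟨m, fun S γ Φ t hS _ _ => ?_⟩
    obtain ⟨T, hTS, hTcard⟩ := Finset.exists_subset_card_eq (s := S) (n := m) hS
    refine ⟨T, hTS, hTcard, fun u v hu hv hc hck => ?_⟩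
    have hu0 : u = ∅ := Finset.card_eq_zero.mp (Nat.le_zero.mp hck)
    have hv0 : v = ∅ := Finset.card_eq_zero.mp (by omega)
    rw [hu0, hv0]
  | succ k ihk =>
    intro M m
    obtain ⟨q1, h1⟩ := ihk M m
    obtain ⟨q2, h2⟩ := myRamsey (k+1) M q1
    refine ⟨q2, fun S γ Φ t hS hΦ ht => ?_⟩
    obtain ⟨T₂, hT₂S, hT₂card, hT₂mono⟩ := h2 S γ Φ t hS hΦ ht
    obtain ⟨T, hTT₂, hTcard, hTmono⟩ :=
      h1 T₂ γ Φ t (le_of_eq hT₂card.symm) (fun u hu => hΦ u (hu.trans hT₂S)) ht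
    refine ⟨T, hTT₂.trans hT₂S, hTcard, ?_⟩
    intro u v hu hv hc hck
    rcases Nat.lt_or_ge u.card (k+1) with hlt | hge
    · exact hTmono u v hu hv hc (by omega)
    · have hcu : u.card = k + 1 := le_antisymm hck hge
      exact hT₂mono u v (hu.trans hTT₂) (hv.trans hTT₂) hcu (by omega)

end StmtAux

namespace StmtAux

variable {k : ℕ}

/-- The set of values of a tuple. -/
noncomputable def vals (x : Fin k → ℕ) : Finset ℕ := Finset.image x Finset.univ

lemma mem_vals (x : Fin k → ℕ) (i : Fin k) : x i ∈ vals x :=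
  Finset.mem_image.mpr ⟨i, Finset.mem_univ i, rfl⟩

lemma vals_card_le (x : Fin k → ℕ) : (vals x).card ≤ k := by
  refine le_trans Finset.card_image_le ?_
  simp

lemma vals_subset {E : Finset ℕ} {x : Fin k → ℕ} (h : ∀ i, x i ∈ E) : vals x ⊆ E := by
  intro b hb
  obtain ⟨i, _, rfl⟩ := Finset.mem_image.mp hb
  exact h i

/-- The order pattern of a tuple, as a function `Fin k → Fin k`. -/
noncomputable def patt (x : Fin k → ℕ) : Fin k → Fin k := fun i =>
  ⟨(((vals x).orderIsoOfFin rfl).symm ⟨x i, mem_vals x i⟩ : Fin (vals x).card),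
    lt_of_lt_of_le (Fin.is_lt _) (vals_card_le x)⟩

/-- Pattern-indexed evaluation coloring. -/
noncomputable def Phi {γ : Type} (d : γ) (c : (Fin k → ℕ) → γ) (u : Finset ℕ) :
    (Fin k → Fin k) → γ := fun π =>
  if h : ∀ i, ((π i : ℕ) < u.card) then
    c (fun i => ((u.orderIsoOfFin rfl) ⟨(π i : ℕ), h i⟩ : ℕ))
  else d

lemma Phi_eval {γ : Type} (d : γ) (c : (Fin k → ℕ) → γ) (x : Fin k → ℕ) :
    Phi d c (vals x) (patt x) = c x := by
  have h : ∀ i, ((patt x i : ℕ) < (vals x).card) :=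
    fun i => (((vals x).orderIsoOfFin rfl).symm ⟨x i, mem_vals x i⟩).is_lt
  rw [Phi, dif_pos h]
  congr 1
  funext i
  have h1 : (⟨(patt x i : ℕ), h i⟩ : Fin (vals x).card)
      = ((vals x).orderIsoOfFin rfl).symm ⟨x i, mem_vals x i⟩ := by
    apply Fin.ext
    rfl
  rw [h1, OrderIso.apply_symm_apply]

lemma card_vals_eq (x : Fin k → ℕ) :
    (vals x).card = (Finset.image (patt x) Finset.univ).card := by
  classical
  set r := (vals x).card with hr
  set e := (vals x).orderIsoOfFin rfl with he
  set rank : Fin k → Fin r := fun i => e.symm ⟨x i, mem_vals x i⟩ with hrank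
  set φ : Fin r → Fin k := Fin.castLE (vals_card_le x) with hφ
  have hinj : Function.Injective φ := Fin.castLE_injective _
  have himg : Finset.image (patt x) Finset.univ
      = Finset.image φ (Finset.image rank Finset.univ) := by
    rw [Finset.image_image]
    rfl
  have hsurj : Finset.image rank Finset.univ = (Finset.univ : Finset (Fin r)) := by
    apply Finset.eq_univ_of_forall
    intro jr
    have hmem : ((e jr : ℕ)) ∈ vals x := (e jr).2
    obtain ⟨i, _, hi⟩ := Finset.mem_image.mp hmem
    refine Finset.mem_image.mpr ⟨i, Finset.mem_univ i, ?_⟩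
    have : (⟨x i, mem_vals x i⟩ : {a // a ∈ vals x}) = e jr := Subtype.ext hi
    rw [hrank]
    simp only [this]
    exact e.symm_apply_apply jr
  rw [himg, hsurj, Finset.card_image_of_injective _ hinj, Finset.card_univ, Fintype.card_fin]

end StmtAux

open StmtAux in
/-- Lemma 3.13: Proposition A for lex #-decreasing implies Proposition A for
#-decreasing. -/
theorem stmt_11
    (hlex : ∀ k p : ℕ, 0 < k → 0 < p → ∀ V : FunAssign (Fin k → ℕ),
      LexSharpDecreasing V →
      ∃ (A : Finset (Fin k → ℕ)) (E : Finset ℕ), E.card = p ∧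
        (∀ x : Fin k → ℕ, (∀ i, x i ∈ E) → x ∈ A) ∧
        hasAtMostRegVals (V.U A) E (k ^ k)) :
    ∀ k p : ℕ, 0 < k → 0 < p → ∀ V : FunAssign (Fin k → ℕ),
      SharpDecreasing V →
      ∃ (A : Finset (Fin k → ℕ)) (E : Finset ℕ), E.card = p ∧
        (∀ x : Fin k → ℕ, (∀ i, x i ∈ E) → x ∈ A) ∧
        hasAtMostRegVals (V.U A) E (k ^ k) := by
  intro k p hk hp V hV
  classical
  obtain ⟨q, hq⟩ := myRamseyAll k ((1 + (k+1)^(k+1)) ^ (k ^ k)) p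
  obtain ⟨A', E', hE'card, hcube', hreg'⟩ :=
    hlex (k+1) (max q 1) (Nat.succ_pos k) (by omega) (lift V) (lift_lex hk hV)
  set A : Finset (Fin k → ℕ) := pre A' with hA
  have hRfin : ({y : Fin (k+1) → ℕ | ∃ x : Fin (k+1) → ℕ, (∀ i, x i ∈ E') ∧
      (lift V).U A' x = y ∧ (⨆ i, y i) < ⨅ i, x i}).Finite := hreg'.1
  have hRcard : ({y : Fin (k+1) → ℕ | ∃ x : Fin (k+1) → ℕ, (∀ i, x i ∈ E') ∧
      (lift V).U A' x = y ∧ (⨆ i, y i) < ⨅ i, x i}).ncard ≤ (k+1)^(k+1) := hreg'.2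
  set Rfin := hRfin.toFinset with hRfindef
  set c : (Fin k → ℕ) → Option (Fin (k+1) → ℕ) := fun x =>
    if (⨆ i, V.U A x i) < ⨅ i, x i then some (iot (V.U A x)) else none with hc
  set Φ : Finset ℕ → ((Fin k → Fin k) → Option (Fin (k+1) → ℕ)) := Phi none c with hPhidef
  set t : Finset ((Fin k → Fin k) → Option (Fin (k+1) → ℕ)) :=
    Fintype.piFinset (fun _ => insert none (Rfin.image some)) with htdef
  -- coordinates of `iot x` lie in `E'` if those of `x` do
  have hiotmem : ∀ x : Fin k → ℕ, (∀ i, x i ∈ E') → ∀ i', iot x i' ∈ E' := by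
    intro x hx i'
    induction i' using Fin.cases with
    | zero =>
      obtain ⟨i0, hi0⟩ := exists_eq_sup hk x
      simpa [iot, hi0] using hx i0
    | succ j => simpa [iot] using hx j
  -- tuples with coordinates in `E'` have their `iot`-image in `A'`, hence lie in `A`
  have hcA : ∀ x : Fin k → ℕ, (∀ i, x i ∈ E') → x ∈ A := by
    intro x hx
    rw [hA, mem_pre]
    exact hcube' (iot x) (hiotmem x hx)
  -- regressive values produce members of the lifted regressive set
  have hcR : ∀ x : Fin k → ℕ, (∀ i, x i ∈ E') → (⨆ i, V.U A x i) < (⨅ i, x i) →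
      iot (V.U A x) ∈ Rfin := by
    intro x hx hlt
    rw [hRfindef, Set.Finite.mem_toFinset]
    refine ⟨iot x, hiotmem x hx, ?_, ?_⟩
    · rw [lift_U_iot]
    · rw [sup_iot hk, inf_iot hk]
      exact hlt
  -- the coloring takes values in `t`
  have hΦt : ∀ u, u ⊆ E' → Φ u ∈ t := by
    intro u hu
    rw [htdef, Fintype.mem_piFinset]
    intro π
    rw [hPhidef, Phi]
    by_cases h : ∀ i, ((π i : ℕ) < u.card)
    · rw [dif_pos h]
      set x : Fin k → ℕ := fun i => ((u.orderIsoOfFin rfl) ⟨(π i : ℕ), h i⟩ : ℕ) with hx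
      have hxE : ∀ i, x i ∈ E' := fun i => hu ((u.orderIsoOfFin rfl) ⟨(π i : ℕ), h i⟩).2
      by_cases hreg : (⨆ i, V.U A x i) < ⨅ i, x i
      · have : c x = some (iot (V.U A x)) := by rw [hc]; exact if_pos hreg
        rw [this]
        exact Finset.mem_insert_of_mem (Finset.mem_image_of_mem some (hcR x hxE hreg))
      · have : c x = none := by rw [hc]; exact if_neg hreg
        rw [this]
        exact Finset.mem_insert_self _ _
    · rw [dif_neg h]
      exact Finset.mem_insert_self _ _
  -- cardinality bound on the palette
  have htcard : t.card ≤ (1 + (k+1)^(k+1)) ^ (k ^ k) := by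
    rw [htdef, Fintype.card_piFinset]
    rw [Finset.prod_const]
    have h1 : (insert (none : Option (Fin (k+1) → ℕ)) (Rfin.image some)).card
        ≤ 1 + (k+1)^(k+1) := by
      refine le_trans (Finset.card_insert_le _ _) ?_
      have h2 : (Rfin.image some).card ≤ Rfin.card := Finset.card_image_le
      have h3 : Rfin.card ≤ (k+1)^(k+1) := by
        rw [hRfindef, ← Set.ncard_eq_toFinset_card _ hRfin]; exact hRcard
      have h5 := le_trans h2 h3
      simpa [Nat.add_comm] using Nat.add_le_add_right h5 1
    have h4 : (Finset.univ : Finset (Fin k → Fin k)).card = k ^ k := by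
      simp [Finset.card_univ]
    rw [h4]
    exact Nat.pow_le_pow_left h1 _
  -- apply Ramsey
  obtain ⟨E, hEE', hEcard, hEmono⟩ :=
    hq E' _ Φ t (by rw [hE'card]; exact le_max_left q 1) hΦt htcard
  have hEsub : ∀ x : Fin k → ℕ, (∀ i, x i ∈ E) → (∀ i, x i ∈ E') :=
    fun x hx i => hEE' (hx i)
  refine ⟨A, E, hEcard, fun x hx => hcA x (hEsub x hx), ?_⟩
  -- count the regressive values via patterns
  set f : (Fin k → ℕ) → (Fin k → Fin k) := fun y =>
    if h : ∃ x : Fin k → ℕ, (∀ i, x i ∈ E) ∧ V.U A x = y ∧ (⨆ i, y i) < ⨅ i, x i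
    then patt h.choose else (fun _ => ⟨0, hk⟩) with hf
  have hkey : ∀ y : Fin k → ℕ,
      y ∈ {y : Fin k → ℕ | ∃ x : Fin k → ℕ, (∀ i, x i ∈ E) ∧ V.U A x = y ∧
        (⨆ i, y i) < ⨅ i, x i} →
      ∃ x : Fin k → ℕ, (∀ i, x i ∈ E) ∧ V.U A x = y ∧ (⨆ i, y i) < ⨅ i, x i ∧
        f y = patt x ∧ Φ (vals x) (patt x) = some (iot y) := by
    intro y hy
    obtain ⟨x₀, hy'⟩ := hy
    have hex : ∃ x : Fin k → ℕ, (∀ i, x i ∈ E) ∧ V.U A x = y ∧ (⨆ i, y i) < ⨅ i, x i :=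
      ⟨x₀, hy'⟩
    obtain ⟨hx1, hx2, hx3⟩ := hex.choose_spec
    have hfy : f y = patt hex.choose := by rw [hf]; exact dif_pos hex
    refine ⟨hex.choose, hx1, hx2, hx3, hfy, ?_⟩
    rw [hPhidef, Phi_eval]
    have : c hex.choose = some (iot (V.U A hex.choose)) := by
      rw [hc]; exact if_pos (by rw [hx2]; exact hx3)
    rw [this, hx2]
  have hinj : Set.InjOn f {y : Fin k → ℕ | ∃ x : Fin k → ℕ, (∀ i, x i ∈ E) ∧
      V.U A x = y ∧ (⨆ i, y i) < ⨅ i, x i} := by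
    intro y1 hy1 y2 hy2 heq
    obtain ⟨x1, hx1E, hx1v, hx1r, hf1, hΦ1⟩ := hkey y1 hy1
    obtain ⟨x2, hx2E, hx2v, hx2r, hf2, hΦ2⟩ := hkey y2 hy2
    have hpatt : patt x1 = patt x2 := by rw [← hf1, ← hf2, heq]
    have hcards : (vals x1).card = (vals x2).card := by
      rw [card_vals_eq, card_vals_eq, hpatt]
    have hmono : Φ (vals x1) = Φ (vals x2) :=
      hEmono (vals x1) (vals x2) (vals_subset hx1E) (vals_subset hx2E)
        hcards (vals_card_le x1)
    have : some (iot y1) = some (iot y2) := by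
      rw [← hΦ1, ← hΦ2, ← hpatt, hmono]
    exact iot_inj (Option.some_injective _ this)
  constructor
  · apply Set.Finite.of_finite_image (f := f) _ hinj
    exact Set.toFinite _
  · calc {y : Fin k → ℕ | ∃ x : Fin k → ℕ, (∀ i, x i ∈ E) ∧ V.U A x = y ∧
        (⨆ i, y i) < ⨅ i, x i}.ncard
        ≤ (Set.univ : Set (Fin k → Fin k)).ncard := by
          exact Set.ncard_le_ncard_of_injOn f (fun a _ => Set.mem_univ (f a)) hinj
            Set.finite_univ
      _ = k ^ k := by
          rw [Set.ncard_univ]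
          simp [Nat.card_eq_fintype_card]
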